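/- Let T_n denote the residual integral operator after n steps of \textsc{RPCholesky} sampling applied to a psd kernel, where in each step E[T_i | s₁,…,s_{i−1}] = Φ(T_{i−1}) with Φ(A) = A − A²/Tr A. Then E[T_n] ⪯ Φⁿ(T) in the Loewner order, where Φⁿ is the n-fold composition of Φ. (Finite-dimensional version: a random sequence of psd matrices T₀ = T, with E[T_i | T_{i−1}] = Φ(T_{i−1}) and 0 ⪯ T_i ⪯ T_{i−1} a.s., satisfies E[T_n] ⪯ Φⁿ(T).) -/

import Mathlib

open MeasureTheory

/-- The expected one-step RPCholesky map `Φ(A) = A − A²/Tr A`. -/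
noncomputable def rpcPhi {N : ℕ} (A : Matrix (Fin N) (Fin N) ℝ) :
    Matrix (Fin N) (Fin N) ℝ :=
  A - A.trace⁻¹ • (A * A)

section RPCAux
open Matrix

variable {N : ℕ}

/-- trace of a real hermitian matrix equals sum of eigenvalues. -/
lemma trace_eq_sum_eig {A : Matrix (Fin N) (Fin N) ℝ} (hA : A.IsHermitian) :
    A.trace = ∑ i, hA.eigenvalues i := by
  conv_lhs => rw [hA.spectral_theorem, Unitary.conjStarAlgAut_apply]
  rw [Matrix.trace_mul_cycle]
  have : (star (hA.eigenvectorUnitary : Matrix (Fin N) (Fin N) ℝ)) *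
      (hA.eigenvectorUnitary : Matrix (Fin N) (Fin N) ℝ) = 1 := by
    exact Matrix.mem_unitaryGroup_iff'.mp hA.eigenvectorUnitary.2
  rw [this, Matrix.one_mul, Matrix.trace_diagonal]
  simp

lemma smul_one_sub_psd {Q : Matrix (Fin N) (Fin N) ℝ} (hQ : Q.PosSemidef) :
    (Q.trace • (1 : Matrix (Fin N) (Fin N) ℝ) - Q).PosSemidef := by
  have h := hQ.1
  have hdiag : Q.trace • (1 : Matrix (Fin N) (Fin N) ℝ) - Q =
      (h.eigenvectorUnitary : Matrix (Fin N) (Fin N) ℝ) *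
        (Matrix.diagonal fun i => Q.trace - h.eigenvalues i) *
        (star (h.eigenvectorUnitary : Matrix (Fin N) (Fin N) ℝ)) := by
    have hU : (h.eigenvectorUnitary : Matrix (Fin N) (Fin N) ℝ) *
        (star (h.eigenvectorUnitary : Matrix (Fin N) (Fin N) ℝ)) = 1 :=
      Matrix.mem_unitaryGroup_iff.mp h.eigenvectorUnitary.2
    have hd : (Matrix.diagonal fun i => Q.trace - h.eigenvalues i) =
        Q.trace • (1 : Matrix (Fin N) (Fin N) ℝ) -
          Matrix.diagonal (RCLike.ofReal ∘ h.eigenvalues) := by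
      rw [← Matrix.diagonal_one, ← Matrix.diagonal_smul, ← Matrix.diagonal_sub]
      ext i j
      by_cases hij : i = j <;>
        simp [Matrix.diagonal, hij, Matrix.one_apply, Matrix.smul_apply]
    rw [hd, Matrix.mul_sub, Matrix.sub_mul, Matrix.mul_smul, Matrix.smul_mul, Matrix.mul_one,
      hU]
    congr 1
    exact h.spectral_theorem
  rw [hdiag]
  have : (Matrix.diagonal fun i => Q.trace - h.eigenvalues i).PosSemidef := by
    refine Matrix.posSemidef_diagonal_iff.mpr fun i => ?_
    have h1 : h.eigenvalues i ≤ ∑ j, h.eigenvalues j :=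
      Finset.single_le_sum (fun j _ => hQ.eigenvalues_nonneg j) (Finset.mem_univ i)
    have := trace_eq_sum_eig h
    linarith
  exact this.mul_mul_conjTranspose_same _

lemma psd_trace_zero {Q : Matrix (Fin N) (Fin N) ℝ} (hQ : Q.PosSemidef)
    (h0 : Q.trace = 0) : Q = 0 := by
  have h := hQ.1
  have hsum : ∑ i, h.eigenvalues i = 0 := by rw [← trace_eq_sum_eig h, h0]
  have hz : ∀ i ∈ Finset.univ, h.eigenvalues i = 0 :=
    (Finset.sum_eq_zero_iff_of_nonneg (fun i _ => hQ.eigenvalues_nonneg i)).mp hsum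
  have : Matrix.diagonal (RCLike.ofReal ∘ h.eigenvalues) = (0 : Matrix (Fin N) (Fin N) ℝ) := by
    ext i j
    by_cases hij : i = j <;>
      simp [Matrix.diagonal, hij, hz j (Finset.mem_univ j)]
  conv_lhs => rw [h.spectral_theorem, Unitary.conjStarAlgAut_apply]
  rw [this, Matrix.mul_zero, Matrix.zero_mul]

open scoped MatrixOrder in
lemma smul_sub_sq_psd {Q : Matrix (Fin N) (Fin N) ℝ} (hQ : Q.PosSemidef) :
    (Q.trace • Q - Q * Q).PosSemidef := by
  classical
  have hs : (CFC.sqrt Q).PosSemidef := (CFC.sqrt_nonneg Q).posSemidef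
  have hsq : CFC.sqrt Q * CFC.sqrt Q = Q := CFC.sqrt_mul_sqrt_self Q hQ.nonneg
  have key : ∀ S : Matrix (Fin N) (Fin N) ℝ, S.IsHermitian → S * S = Q →
      Q.trace • Q - Q * Q = S * (Q.trace • (1 : Matrix (Fin N) (Fin N) ℝ) - Q) * Sᴴ := by
    intro S hS hSQ
    rw [hS.eq, ← hSQ, Matrix.mul_sub, Matrix.sub_mul, Matrix.mul_smul, Matrix.smul_mul,
      Matrix.mul_one]
    congr 1
    noncomm_ring
  rw [key (CFC.sqrt Q) hs.1 hsq]
  exact (smul_one_sub_psd hQ).mul_mul_conjTranspose_same _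

lemma psd_smul {Q : Matrix (Fin N) (Fin N) ℝ} (hQ : Q.PosSemidef) {c : ℝ} (hc : 0 ≤ c) :
    (c • Q).PosSemidef := by
  refine Matrix.PosSemidef.of_dotProduct_mulVec_nonneg ?_ fun x => ?_
  · unfold Matrix.IsHermitian
    rw [Matrix.conjTranspose_smul, hQ.1.eq]
    simp
  · rw [Matrix.smul_mulVec, dotProduct_smul]
    exact mul_nonneg hc (hQ.dotProduct_mulVec_nonneg x)

lemma rpcPhi_zero : rpcPhi (0 : Matrix (Fin N) (Fin N) ℝ) = 0 := by
  simp [rpcPhi]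

lemma rpcPhi_psd {Q : Matrix (Fin N) (Fin N) ℝ} (hQ : Q.PosSemidef) :
    (rpcPhi Q).PosSemidef := by
  by_cases h0 : Q.trace = 0
  · rw [psd_trace_zero hQ h0, rpcPhi_zero]; exact Matrix.PosSemidef.zero
  · have : rpcPhi Q = Q.trace⁻¹ • (Q.trace • Q - Q * Q) := by
      rw [rpcPhi, smul_sub, smul_smul, inv_mul_cancel₀ h0, one_smul]
    rw [this]
    have htr : 0 ≤ Q.trace := by
      rw [trace_eq_sum_eig hQ.1]
      exact Finset.sum_nonneg fun i _ => hQ.eigenvalues_nonneg i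
    exact psd_smul (smul_sub_sq_psd hQ) (inv_nonneg.mpr htr)

lemma psd_trace_nonneg {Q : Matrix (Fin N) (Fin N) ℝ} (hQ : Q.PosSemidef) : 0 ≤ Q.trace := by
  rw [trace_eq_sum_eig hQ.1]
  exact Finset.sum_nonneg fun i _ => hQ.eigenvalues_nonneg i

lemma rpcPhi_isHermitian {A : Matrix (Fin N) (Fin N) ℝ} (hA : A.IsHermitian) :
    (rpcPhi A).IsHermitian := by
  unfold Matrix.IsHermitian rpcPhi
  rw [Matrix.conjTranspose_sub, Matrix.conjTranspose_smul, Matrix.conjTranspose_mul, hA.eq]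
  simp

lemma quad_phi {A : Matrix (Fin N) (Fin N) ℝ} (hA : A.IsHermitian) (x : Fin N → ℝ) :
    x ⬝ᵥ (rpcPhi A *ᵥ x) =
      x ⬝ᵥ (A *ᵥ x) - A.trace⁻¹ * ((A *ᵥ x) ⬝ᵥ (A *ᵥ x)) := by
  rw [rpcPhi, Matrix.sub_mulVec, dotProduct_sub, Matrix.smul_mulVec,
    dotProduct_smul]
  congr 2
  rw [← Matrix.mulVec_mulVec, Matrix.dotProduct_mulVec x A]
  congr 1
  rw [← Matrix.mulVec_transpose]
  have hT : Aᵀ = A := by simpa using hA.eq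
  rw [hT]

lemma qol_vec {s t : ℝ} (hs : 0 < s) (ht : 0 < t) (u w : Fin N → ℝ) :
    (s + t)⁻¹ * ((u + w) ⬝ᵥ (u + w)) ≤ s⁻¹ * (u ⬝ᵥ u) + t⁻¹ * (w ⬝ᵥ w) := by
  have hx : (0:ℝ) ≤ (t • u - s • w) ⬝ᵥ (t • u - s • w) := by
    have := dotProduct_star_self_nonneg (t • u - s • w)
    simpa using this
  have hexp : (t • u - s • w) ⬝ᵥ (t • u - s • w)
      = t * t * (u ⬝ᵥ u) - 2 * (s * t) * (u ⬝ᵥ w) + s * s * (w ⬝ᵥ w) := by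
    simp [sub_dotProduct, dotProduct_sub, smul_dotProduct,
      dotProduct_smul, smul_eq_mul, dotProduct_comm w u]
    ring
  have hupw : (u + w) ⬝ᵥ (u + w) = (u ⬝ᵥ u) + 2 * (u ⬝ᵥ w) + (w ⬝ᵥ w) := by
    simp [add_dotProduct, dotProduct_add, dotProduct_comm w u]
    ring
  rw [hexp] at hx
  rw [hupw]
  have hst : 0 < s + t := by linarith
  rw [inv_mul_eq_div, inv_mul_eq_div, inv_mul_eq_div,
    div_add_div _ _ (ne_of_gt hs) (ne_of_gt ht), div_le_div_iff₀ hst (mul_pos hs ht)]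
  nlinarith [hx]

lemma rpcPhi_superadd {P Q : Matrix (Fin N) (Fin N) ℝ}
    (hP : P.PosSemidef) (hQ : Q.PosSemidef) :
    (rpcPhi (P + Q) - rpcPhi P - rpcPhi Q).PosSemidef := by
  by_cases hp0 : P.trace = 0
  · rw [psd_trace_zero hP hp0]
    simp [rpcPhi_zero]
    exact Matrix.PosSemidef.zero
  by_cases hq0 : Q.trace = 0
  · rw [psd_trace_zero hQ hq0]
    simp [rpcPhi_zero]
    exact Matrix.PosSemidef.zero
  have hs : 0 < P.trace := lt_of_le_of_ne (psd_trace_nonneg hP) (Ne.symm hp0)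
  have ht : 0 < Q.trace := lt_of_le_of_ne (psd_trace_nonneg hQ) (Ne.symm hq0)
  have hPQ : (P + Q).IsHermitian := hP.1.add hQ.1
  refine Matrix.PosSemidef.of_dotProduct_mulVec_nonneg ?_ fun x => ?_
  · exact ((rpcPhi_isHermitian hPQ).sub (rpcPhi_isHermitian hP.1)).sub
      (rpcPhi_isHermitian hQ.1)
  · have hstar : star x = x := by simp
    rw [hstar, Matrix.sub_mulVec, Matrix.sub_mulVec, dotProduct_sub,
      dotProduct_sub, quad_phi hPQ, quad_phi hP.1, quad_phi hQ.1]
    have htr : (P + Q).trace = P.trace + Q.trace := Matrix.trace_add P Q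
    have hmv : (P + Q) *ᵥ x = P *ᵥ x + Q *ᵥ x := Matrix.add_mulVec P Q x
    rw [htr, hmv]
    have := qol_vec hs ht (P *ᵥ x) (Q *ᵥ x)
    simp only [dotProduct_add, add_dotProduct,
      dotProduct_comm (Q *ᵥ x) (P *ᵥ x)] at this ⊢
    linarith

lemma rpcPhi_mono {B C : Matrix (Fin N) (Fin N) ℝ}
    (hB : B.PosSemidef) (hBC : (C - B).PosSemidef) :
    (rpcPhi C - rpcPhi B).PosSemidef := by
  have hC : C = B + (C - B) := by abel
  have h1 := rpcPhi_superadd hB hBC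
  have h2 := rpcPhi_psd hBC
  have : rpcPhi C - rpcPhi B
      = (rpcPhi (B + (C - B)) - rpcPhi B - rpcPhi (C - B)) + rpcPhi (C - B) := by
    rw [← hC]; abel
  rw [this]
  exact h1.add h2

section Integral
variable {Ω : Type*} {m0 : MeasurableSpace Ω} {μ : Measure Ω}

lemma integral_quad {G : Ω → Matrix (Fin N) (Fin N) ℝ}
    (h : ∀ x y, Integrable (fun ω => G ω x y) μ) (v : Fin N → ℝ) :
    ∫ ω, v ⬝ᵥ (G ω *ᵥ v) ∂μ
      = v ⬝ᵥ ((Matrix.of fun x y => ∫ ω, G ω x y ∂μ) *ᵥ v) := by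
  have hrow : ∀ x : Fin N, Integrable (fun ω => v x * ∑ y, G ω x y * v y) μ := fun x =>
    (integrable_finset_sum _ (fun y _ => (h x y).mul_const (v y))).const_mul (v x)
  calc ∫ ω, v ⬝ᵥ (G ω *ᵥ v) ∂μ = ∫ ω, ∑ x, v x * ∑ y, G ω x y * v y ∂μ := by
        simp [dotProduct, Matrix.mulVec]
    _ = ∑ x, ∫ ω, v x * ∑ y, G ω x y * v y ∂μ := integral_finset_sum _ (fun x _ => hrow x)
    _ = ∑ x, v x * ∑ y, (∫ ω, G ω x y ∂μ) * v y := by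
        refine Finset.sum_congr rfl fun x _ => ?_
        rw [integral_const_mul]
        congr 1
        rw [integral_finset_sum _ (fun y _ => (h x y).mul_const (v y))]
        exact Finset.sum_congr rfl fun y _ => integral_mul_const _ _
    _ = v ⬝ᵥ ((Matrix.of fun x y => ∫ ω, G ω x y ∂μ) *ᵥ v) := by
        simp [dotProduct, Matrix.mulVec]

lemma integral_mulVec_apply {G : Ω → Matrix (Fin N) (Fin N) ℝ}
    (h : ∀ x y, Integrable (fun ω => G ω x y) μ) (v : Fin N → ℝ) (x : Fin N) :
    ((Matrix.of fun x y => ∫ ω, G ω x y ∂μ) *ᵥ v) x = ∫ ω, (G ω *ᵥ v) x ∂μ := by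
  simp only [Matrix.mulVec, dotProduct, Matrix.of_apply]
  rw [integral_finset_sum _ (fun y _ => (h x y).mul_const (v y))]
  exact (Finset.sum_congr rfl fun y _ => (integral_mul_const _ _).symm)

lemma integral_trace {G : Ω → Matrix (Fin N) (Fin N) ℝ}
    (h : ∀ x y, Integrable (fun ω => G ω x y) μ) :
    (Matrix.of fun x y => ∫ ω, G ω x y ∂μ).trace = ∫ ω, (G ω).trace ∂μ := by
  simp only [Matrix.trace, Matrix.diag, Matrix.of_apply]
  exact (integral_finset_sum _ (fun i _ => h i i)).symm

end Integral

lemma dot_self_nonneg (w : Fin N → ℝ) : 0 ≤ w ⬝ᵥ w := by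
  simpa using dotProduct_star_self_nonneg w

lemma quad_integrable {Ω : Type*} {m0 : MeasurableSpace Ω} {μ : Measure Ω}
    {G : Ω → Matrix (Fin N) (Fin N) ℝ}
    (h : ∀ x y, Integrable (fun ω => G ω x y) μ) (v : Fin N → ℝ) :
    Integrable (fun ω => v ⬝ᵥ (G ω *ᵥ v)) μ := by
  simp only [dotProduct, Matrix.mulVec]
  exact integrable_finset_sum _ fun x _ =>
    (integrable_finset_sum _ (fun y _ => (h x y).mul_const (v y))).const_mul (v x)

section Jensen
variable {Ω : Type*} {m0 : MeasurableSpace Ω}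

lemma jensen_phi (μ : Measure Ω) [IsProbabilityMeasure μ]
    (F : Ω → Matrix (Fin N) (Fin N) ℝ)
    (hpsd : ∀ᵐ ω ∂μ, (F ω).PosSemidef)
    (htr : ∀ᵐ ω ∂μ, 0 < (F ω).trace)
    (hFint : ∀ x y, Integrable (fun ω => F ω x y) μ)
    (hphiint : ∀ x y, Integrable (fun ω => rpcPhi (F ω) x y) μ) :
    (rpcPhi (Matrix.of fun x y => ∫ ω, F ω x y ∂μ)
      - Matrix.of fun x y => ∫ ω, rpcPhi (F ω) x y ∂μ).PosSemidef := by
  set E : Matrix (Fin N) (Fin N) ℝ := Matrix.of fun x y => ∫ ω, F ω x y ∂μ with hE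
  set P : Matrix (Fin N) (Fin N) ℝ := Matrix.of fun x y => ∫ ω, rpcPhi (F ω) x y ∂μ with hP
  -- trace of F, integrable and positive
  have hZint : Integrable (fun ω => (F ω).trace) μ := by
    simp only [Matrix.trace, Matrix.diag]
    exact integrable_finset_sum _ (fun i _ => hFint i i)
  have hc : E.trace = ∫ ω, (F ω).trace ∂μ := integral_trace hFint
  have hcpos : 0 < E.trace := by
    rw [hc]
    have hnonneg : 0 ≤ᵐ[μ] fun ω => (F ω).trace := htr.mono fun ω h => h.le
    rcases (integral_nonneg_of_ae hnonneg).lt_or_eq with h | h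
    · exact h
    · exfalso
      have hz : (fun ω => (F ω).trace) =ᵐ[μ] 0 :=
        (integral_eq_zero_iff_of_nonneg_ae hnonneg hZint).mp h.symm
      obtain ⟨ω, h1, h2⟩ := (htr.and hz).exists
      simp only [Pi.zero_apply] at h2
      linarith
  -- Hermitian of E
  have hEherm : E.IsHermitian := by
    unfold Matrix.IsHermitian
    ext i j
    simp only [Matrix.conjTranspose_apply, hE, Matrix.of_apply, star_trivial]
    refine integral_congr_ae (hpsd.mono fun ω h => ?_)
    simpa using (Matrix.IsHermitian.apply h.1 j i).symm
  have hPherm : P.IsHermitian := by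
    unfold Matrix.IsHermitian
    ext i j
    simp only [Matrix.conjTranspose_apply, hP, Matrix.of_apply, star_trivial]
    refine integral_congr_ae (hpsd.mono fun ω h => ?_)
    simpa using (Matrix.IsHermitian.apply (rpcPhi_isHermitian h.1) j i).symm
  refine Matrix.PosSemidef.of_dotProduct_mulVec_nonneg ((rpcPhi_isHermitian hEherm).sub hPherm) fun v => ?_
  have hsv : star v = v := by simp
  rw [hsv, Matrix.sub_mulVec, dotProduct_sub]
  set y : Fin N → ℝ := E *ᵥ v with hy'
  set c : ℝ := E.trace with hcdef
  have hy : ∀ j, y j = ∫ ω, (F ω *ᵥ v) j ∂μ := integral_mulVec_apply hFint v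
  have hfj : ∀ j, Integrable (fun ω => (F ω *ᵥ v) j) μ := by
    intro j
    simp only [Matrix.mulVec, dotProduct]
    exact integrable_finset_sum _ (fun k _ => (hFint j k).mul_const (v k))
  have hfyint : Integrable (fun ω => (F ω *ᵥ v) ⬝ᵥ y) μ := by
    simp only [dotProduct]
    exact integrable_finset_sum _ fun j _ => (hfj j).mul_const _
  have hqFint : Integrable (fun ω => v ⬝ᵥ (F ω *ᵥ v)) μ := quad_integrable hFint v
  have hqPhiint : Integrable (fun ω => v ⬝ᵥ (rpcPhi (F ω) *ᵥ v)) μ := quad_integrable hphiint v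
  have hIeq : (fun ω => v ⬝ᵥ (rpcPhi (F ω) *ᵥ v))
      =ᵐ[μ] fun ω => v ⬝ᵥ (F ω *ᵥ v)
        - ((F ω).trace)⁻¹ * ((F ω *ᵥ v) ⬝ᵥ (F ω *ᵥ v)) :=
    hpsd.mono fun ω h => quad_phi h.1 v
  have hIint : Integrable
      (fun ω => ((F ω).trace)⁻¹ * ((F ω *ᵥ v) ⬝ᵥ (F ω *ᵥ v))) μ := by
    refine (hqFint.sub hqPhiint).congr (hpsd.mono fun ω h => ?_)
    simp only [Pi.sub_apply]
    rw [quad_phi h.1 v]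
    ring
  set I : ℝ := ∫ ω, ((F ω).trace)⁻¹ * ((F ω *ᵥ v) ⬝ᵥ (F ω *ᵥ v)) ∂μ with hIdef
  -- integral of f ⬝ᵥ y is y ⬝ᵥ y
  have hfy : ∫ ω, (F ω *ᵥ v) ⬝ᵥ y ∂μ = y ⬝ᵥ y := by
    simp only [dotProduct]
    rw [integral_finset_sum _ (fun j _ => (hfj j).mul_const _)]
    refine Finset.sum_congr rfl fun j _ => ?_
    rw [integral_mul_const, ← hy j]
  -- Cauchy-Schwarz / quadratic-over-linear step
  have hcne : c ≠ 0 := ne_of_gt hcpos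
  have hGnonneg : ∀ᵐ ω ∂μ, 0 ≤ ((F ω).trace)⁻¹ * ((F ω *ᵥ v) ⬝ᵥ (F ω *ᵥ v))
      - 2 * c⁻¹ * ((F ω *ᵥ v) ⬝ᵥ y) + c⁻¹ * c⁻¹ * (y ⬝ᵥ y) * (F ω).trace := by
    refine htr.mono fun ω hz => ?_
    set f := F ω *ᵥ v
    set Z := (F ω).trace
    have hZne : Z ≠ 0 := ne_of_gt hz
    have hdd : (0:ℝ) ≤ (f - (Z/c) • y) ⬝ᵥ (f - (Z/c) • y) := dot_self_nonneg _
    have hexp : (f - (Z/c) • y) ⬝ᵥ (f - (Z/c) • y)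
        = f ⬝ᵥ f - 2*(Z/c)*(f ⬝ᵥ y) + (Z/c)^2*(y ⬝ᵥ y) := by
      simp only [sub_dotProduct, dotProduct_sub, smul_dotProduct,
        dotProduct_smul, smul_eq_mul, dotProduct_comm y f]
      ring
    rw [hexp] at hdd
    have hkey : Z⁻¹ * (f ⬝ᵥ f - 2*(Z/c)*(f ⬝ᵥ y) + (Z/c)^2*(y ⬝ᵥ y))
        = Z⁻¹ * (f ⬝ᵥ f) - 2 * c⁻¹ * (f ⬝ᵥ y) + c⁻¹ * c⁻¹ * (y ⬝ᵥ y) * Z := by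
      field_simp
    have := mul_nonneg (inv_nonneg.mpr hz.le) hdd
    rw [hkey] at this
    exact this
  have hBint : Integrable (fun ω => 2 * c⁻¹ * ((F ω *ᵥ v) ⬝ᵥ y)) μ := hfyint.const_mul _
  have hCint : Integrable (fun ω => c⁻¹ * c⁻¹ * (y ⬝ᵥ y) * (F ω).trace) μ := by
    simpa [mul_comm] using hZint.const_mul (c⁻¹ * c⁻¹ * (y ⬝ᵥ y))
  have hGint0 : 0 ≤ ∫ ω, (((F ω).trace)⁻¹ * ((F ω *ᵥ v) ⬝ᵥ (F ω *ᵥ v))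
      - 2 * c⁻¹ * ((F ω *ᵥ v) ⬝ᵥ y) + c⁻¹ * c⁻¹ * (y ⬝ᵥ y) * (F ω).trace) ∂μ :=
    integral_nonneg_of_ae hGnonneg
  have hGeq : ∫ ω, (((F ω).trace)⁻¹ * ((F ω *ᵥ v) ⬝ᵥ (F ω *ᵥ v))
      - 2 * c⁻¹ * ((F ω *ᵥ v) ⬝ᵥ y) + c⁻¹ * c⁻¹ * (y ⬝ᵥ y) * (F ω).trace) ∂μ
      = I - 2 * c⁻¹ * (y ⬝ᵥ y) + c⁻¹ * c⁻¹ * (y ⬝ᵥ y) * c := by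
    have hABint : Integrable (fun ω => ((F ω).trace)⁻¹ * ((F ω *ᵥ v) ⬝ᵥ (F ω *ᵥ v))
        - 2 * c⁻¹ * ((F ω *ᵥ v) ⬝ᵥ y)) μ := hIint.sub hBint
    rw [integral_add hABint hCint, integral_sub hIint hBint,
      integral_const_mul, integral_const_mul, hfy, ← hc]
  rw [hGeq] at hGint0
  have hmain : c⁻¹ * (y ⬝ᵥ y) ≤ I := by
    have hccc : c⁻¹ * c⁻¹ * (y ⬝ᵥ y) * c = c⁻¹ * (y ⬝ᵥ y) := by
      field_simp
    rw [hccc] at hGint0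
    linarith
  -- put everything together
  have hqP : v ⬝ᵥ (P *ᵥ v) = ∫ ω, v ⬝ᵥ (rpcPhi (F ω) *ᵥ v) ∂μ := (integral_quad hphiint v).symm
  have hqE : v ⬝ᵥ (E *ᵥ v) = ∫ ω, v ⬝ᵥ (F ω *ᵥ v) ∂μ := (integral_quad hFint v).symm
  have hsplit : ∫ ω, v ⬝ᵥ (rpcPhi (F ω) *ᵥ v) ∂μ = (∫ ω, v ⬝ᵥ (F ω *ᵥ v) ∂μ) - I := by
    rw [integral_congr_ae hIeq, integral_sub hqFint hIint]
  rw [hqP, hsplit, quad_phi hEherm v, ← hy', ← hcdef, ← hqE]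
  linarith

end Jensen

lemma integral_psd {Ω : Type*} {m0 : MeasurableSpace Ω} {μ : Measure Ω}
    {F : Ω → Matrix (Fin N) (Fin N) ℝ}
    (hpsd : ∀ᵐ ω ∂μ, (F ω).PosSemidef)
    (h : ∀ x y, Integrable (fun ω => F ω x y) μ) :
    (Matrix.of fun x y => ∫ ω, F ω x y ∂μ).PosSemidef := by
  refine Matrix.PosSemidef.of_dotProduct_mulVec_nonneg ?_ fun v => ?_
  · unfold Matrix.IsHermitian
    ext i j
    simp only [Matrix.conjTranspose_apply, Matrix.of_apply, star_trivial]
    refine integral_congr_ae (hpsd.mono fun ω hω => ?_)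
    simpa using (Matrix.IsHermitian.apply hω.1 j i).symm
  · have hsv : star v = v := by simp
    rw [hsv, ← integral_quad h v]
    exact integral_nonneg_of_ae (hpsd.mono fun ω hω => by simpa using hω.dotProduct_mulVec_nonneg v)

end RPCAux

/-- RPCholesky residual bound: a random sequence of psd matrices `T_i` with
`T₀ = A`, `0 ⪯ T_{i+1} ⪯ T_i` a.s., and `E[T_{i+1} | ℱ_i] = Φ(T_i)` satisfies
`E[T_n] ⪯ Φⁿ(A)` in the Loewner order. -/
theorem rpcholesky_residual_expectation_bound {N : ℕ}
    {Ω : Type*} {m0 : MeasurableSpace Ω} (μ : Measure Ω) [IsProbabilityMeasure μ]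
    (m : ℕ → MeasurableSpace Ω) (hm : ∀ i, m i ≤ m0)
    (A : Matrix (Fin N) (Fin N) ℝ) (hA : A.PosSemidef)
    (T : ℕ → Ω → Matrix (Fin N) (Fin N) ℝ)
    (hT0 : ∀ ω, T 0 ω = A)
    (hTpsd : ∀ i, ∀ᵐ ω ∂μ, (T i ω).PosSemidef ∧ ((T i ω) - (T (i + 1) ω)).PosSemidef)
    (hTtr : ∀ i, ∀ᵐ ω ∂μ, 0 < (T i ω).trace)
    (hint : ∀ i x y, Integrable (fun ω => T i ω x y) μ)
    (hcond : ∀ i x y,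
      μ[(fun ω => T (i + 1) ω x y) | m i] =ᵐ[μ] fun ω => rpcPhi (T i ω) x y)
    (n : ℕ) :
    ((rpcPhi^[n] A) - Matrix.of fun x y => ∫ ω, T n ω x y ∂μ).PosSemidef := by
  induction n with
  | zero =>
    have hS : (Matrix.of fun x y => ∫ ω, T 0 ω x y ∂μ) = A := by
      ext x y
      simp [hT0, integral_const]
    rw [Function.iterate_zero, id, hS, sub_self]
    exact Matrix.PosSemidef.zero
  | succ n ih =>
    set S : ℕ → Matrix (Fin N) (Fin N) ℝ :=
      fun k => Matrix.of fun x y => ∫ ω, T k ω x y ∂μ with hSdef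
    have hSpsd : (S n).PosSemidef :=
      integral_psd ((hTpsd n).mono fun ω h => h.1) (hint n)
    have hphiint : ∀ x y, Integrable (fun ω => rpcPhi (T n ω) x y) μ := fun x y =>
      (integrable_condExp (f := fun ω => T (n + 1) ω x y)).congr (hcond n x y)
    have hS1 : S (n + 1) = Matrix.of fun x y => ∫ ω, rpcPhi (T n ω) x y ∂μ := by
      ext x y
      simp only [hSdef, Matrix.of_apply]
      rw [← integral_condExp (hm n) (f := fun ω => T (n+1) ω x y)]
      exact integral_congr_ae (hcond n x y)
    have hJ : (rpcPhi (S n) - S (n + 1)).PosSemidef := by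
      rw [hS1]
      exact jensen_phi μ (T n) ((hTpsd n).mono fun ω h => h.1) (hTtr n) (hint n) hphiint
    have hMono : (rpcPhi (rpcPhi^[n] A) - rpcPhi (S n)).PosSemidef :=
      rpcPhi_mono hSpsd ih
    have hsum : rpcPhi^[n + 1] A - S (n + 1)
        = (rpcPhi (rpcPhi^[n] A) - rpcPhi (S n)) + (rpcPhi (S n) - S (n + 1)) := by
      rw [Function.iterate_succ_apply']
      abel
    rw [hsum]
    exact hMono.add hJ
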